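/- Let G = (V,E) be a finite simple undirected graph with n = |V| ≥ 2 vertices and at least one edge, let η ≥ 0, and let O be an orientation of G such that for every edge oriented u→v, indeg(v) ≤ indeg(u) + η. Let D = max_{v∈V} indeg(v). Then ρ*_G ≥ (1 − 3·√(η·log n / D))·D, where log denotes the natural logarithm. -/

import Mathlib

open Finset

set_option maxHeartbeats 1600000 in
/-- If an orientation is locally η-stable, i.e. every edge oriented
`u→v` satisfies `indeg(v) ≤ indeg(u) + η`, and `D` is the maximum in-degree, then
`ρ*_G ≥ (1 − 3√(η·log n/D))·D`. -/
theorem stable_orientation_density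
    {V : Type*} [Fintype V] [DecidableEq V]
    (G : SimpleGraph V) [DecidableRel G.Adj]
    (hn : 2 ≤ Fintype.card V)
    (hE : G.edgeFinset.Nonempty)
    (η : ℝ) (hη : 0 ≤ η)
    (o : Sym2 V → V)
    (ho : ∀ e ∈ G.edgeFinset, o e ∈ e)
    (indeg : V → ℕ)
    (hindeg : ∀ v : V, indeg v = (G.edgeFinset.filter (fun e => o e = v)).card)
    (hstab : ∀ u v : V, G.Adj u v → o s(u, v) = v → (indeg v : ℝ) ≤ (indeg u : ℝ) + η)
    (D : ℕ)
    (hD_ub : ∀ v : V, indeg v ≤ D)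
    (hD_mem : ∃ v : V, indeg v = D)
    (ρstar : ℝ)
    (hρstar_ub : ∀ S : Finset V, S.Nonempty →
      ((G.edgeFinset.filter (fun e => e ∈ S.sym2)).card : ℝ) / (S.card : ℝ) ≤ ρstar)
    (hρstar_mem : ∃ S : Finset V, S.Nonempty ∧
      ((G.edgeFinset.filter (fun e => e ∈ S.sym2)).card : ℝ) / (S.card : ℝ) = ρstar) :
    (1 - 3 * Real.sqrt (η * Real.log (Fintype.card V) / (D : ℝ))) * (D : ℝ) ≤ ρstar := by
  classical
  set n := Fintype.card V with hn_def
  set L := Real.log n with hL_def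
  have hn2 : (2:ℝ) ≤ (n:ℝ) := by exact_mod_cast hn
  have hL23 : (2:ℝ)/3 ≤ L := by
    have h2 : Real.log 2 ≤ L := Real.log_le_log (by norm_num) hn2
    have := Real.log_two_gt_d9
    linarith
  have hLpos : 0 < L := lt_of_lt_of_le (by norm_num) hL23
  -- ρ* ≥ 0
  obtain ⟨S₀, hS₀ne, hS₀eq⟩ := hρstar_mem
  have hρ0 : 0 ≤ ρstar := by
    rw [← hS₀eq]; positivity
  rcases Nat.eq_zero_or_pos D with hD0 | hDpos
  · rw [hD0]
    simpa using hρ0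
  have hDr : (1:ℝ) ≤ (D:ℝ) := by exact_mod_cast hDpos
  -- level sets
  set A : ℝ → Finset V := fun t => Finset.univ.filter (fun v => (D:ℝ) - t ≤ (indeg v : ℝ))
    with hA_def
  have hAmem : ∀ (t : ℝ) (v : V), v ∈ A t ↔ (D:ℝ) - t ≤ (indeg v : ℝ) := by
    intro t v
    simp [hA_def]
  obtain ⟨vmax, hvmax⟩ := hD_mem
  have hAne : ∀ t : ℝ, 0 ≤ t → (A t).Nonempty := by
    intro t ht
    exact ⟨vmax, (hAmem t vmax).2 (by rw [hvmax]; linarith)⟩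
  have hAcard_n : ∀ t : ℝ, ((A t).card : ℝ) ≤ (n:ℝ) := by
    intro t
    have h1 : (A t).card ≤ n := by
      rw [hA_def]
      simpa using Finset.card_filter_le Finset.univ (fun v => (D:ℝ) - t ≤ (indeg v : ℝ))
    exact_mod_cast h1
  -- key density inequality
  have hkey : ∀ t : ℝ, 0 ≤ t →
      ((D:ℝ) - t) * ((A t).card : ℝ) ≤ ρstar * ((A (t+η)).card : ℝ) := by
    intro t ht
    have hsub : G.edgeFinset.filter (fun e => o e ∈ A t) ⊆
        G.edgeFinset.filter (fun e => e ∈ (A (t+η)).sym2) := by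
      intro e he
      rw [Finset.mem_filter] at he ⊢
      obtain ⟨heE, hoe⟩ := he
      refine ⟨heE, ?_⟩
      induction e using Sym2.ind with
      | _ u v =>
        have hadj : G.Adj u v := by rwa [SimpleGraph.mem_edgeFinset, SimpleGraph.mem_edgeSet] at heE
        have hov : o s(u,v) = u ∨ o s(u,v) = v := by
          have := ho _ heE
          rwa [Sym2.mem_iff] at this
        rw [Finset.mk_mem_sym2_iff]
        rcases hov with h | h
        · have hu : (D:ℝ) - t ≤ (indeg u : ℝ) := (hAmem t u).1 (h ▸ hoe)
          have h' : o s(v,u) = u := by rw [Sym2.eq_swap]; exact h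
          have hv : (indeg u : ℝ) ≤ (indeg v : ℝ) + η := hstab v u hadj.symm h'
          exact ⟨(hAmem _ u).2 (by linarith), (hAmem _ v).2 (by linarith)⟩
        · have hv : (D:ℝ) - t ≤ (indeg v : ℝ) := (hAmem t v).1 (h ▸ hoe)
          have hu : (indeg v : ℝ) ≤ (indeg u : ℝ) + η := hstab u v hadj h
          exact ⟨(hAmem _ u).2 (by linarith), (hAmem _ v).2 (by linarith)⟩
    have hcount : (G.edgeFinset.filter (fun e => o e ∈ A t)).card = ∑ v ∈ A t, indeg v := by
      rw [Finset.card_eq_sum_card_fiberwise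
        (f := o) (s := G.edgeFinset.filter (fun e => o e ∈ A t)) (t := A t) (fun e he => (Finset.mem_filter.1 he).2)]
      refine Finset.sum_congr rfl ?_
      intro v hv
      rw [hindeg v]
      congr 1
      ext e
      simp only [Finset.mem_filter]
      constructor
      · rintro ⟨⟨h1, _⟩, h3⟩
        exact ⟨h1, h3⟩
      · rintro ⟨h1, h3⟩
        exact ⟨⟨h1, h3 ▸ hv⟩, h3⟩
    have hsum : ((D:ℝ) - t) * ((A t).card : ℝ) ≤ ∑ v ∈ A t, (indeg v : ℝ) := by
      have := Finset.card_nsmul_le_sum (A t) (fun v => (indeg v : ℝ)) ((D:ℝ) - t)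
        (fun v hv => (hAmem t v).1 hv)
      rw [nsmul_eq_mul] at this
      linarith [this]
    have hsum2 : (∑ v ∈ A t, (indeg v : ℝ)) =
        ((G.edgeFinset.filter (fun e => o e ∈ A t)).card : ℝ) := by
      rw [hcount]
      push_cast
      ring
    have hne : (A (t+η)).Nonempty := hAne (t+η) (by linarith)
    have hpos : (0:ℝ) < ((A (t+η)).card : ℝ) := by exact_mod_cast Finset.card_pos.2 hne
    have hub := hρstar_ub (A (t+η)) hne
    rw [div_le_iff₀ hpos] at hub
    have hcardle : ((G.edgeFinset.filter (fun e => o e ∈ A t)).card : ℝ) ≤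
        ((G.edgeFinset.filter (fun e => e ∈ (A (t+η)).sym2)).card : ℝ) := by
      exact_mod_cast Finset.card_le_card hsub
    calc ((D:ℝ) - t) * ((A t).card : ℝ) ≤ ∑ v ∈ A t, (indeg v : ℝ) := hsum
      _ = ((G.edgeFinset.filter (fun e => o e ∈ A t)).card : ℝ) := hsum2
      _ ≤ ((G.edgeFinset.filter (fun e => e ∈ (A (t+η)).sym2)).card : ℝ) := hcardle
      _ ≤ ρstar * ((A (t+η)).card : ℝ) := hub
  rcases eq_or_lt_of_le hη with hη0 | hηpos
  · -- η = 0 : need D ≤ ρ*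
    have h := hkey 0 le_rfl
    rw [← hη0] at h
    norm_num at h
    have hc : (0:ℝ) < ((A 0).card : ℝ) := by exact_mod_cast Finset.card_pos.2 (hAne 0 le_rfl)
    have hDρ : (D:ℝ) ≤ ρstar := le_of_mul_le_mul_right (by linarith) hc
    have hs0 : Real.sqrt (η * L / (D:ℝ)) = 0 := by
      rw [← hη0]
      simp
    rw [hs0]
    simpa using hDρ
  -- main case: η > 0
  set s := Real.sqrt (η * L / (D:ℝ)) with hs_def
  have hs2 : s^2 = η * L / (D:ℝ) := Real.sq_sqrt (by positivity)
  have hspos : 0 < s := Real.sqrt_pos.2 (by positivity)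
  rcases le_or_gt 1 (3*s) with hεbig | hεsmall
  · have h1 : (1 - 3*s) * (D:ℝ) ≤ 0 :=
      mul_nonpos_iff.2 (Or.inr ⟨by linarith, Nat.cast_nonneg D⟩)
    linarith
  -- 3s < 1
  have hs13 : s < 1/3 := by linarith
  have hsL : s < L/2 := by linarith
  have hηL : η * L = s^2 * (D:ℝ) := by
    rw [hs2]
    field_simp
  by_contra hcon
  push_neg at hcon
  -- ρ* < (1 - 3s) D
  have hρpos : 0 < ρstar := by
    have h0 := hkey 0 le_rfl
    rw [sub_zero] at h0
    have hc0 : (1:ℝ) ≤ ((A 0).card : ℝ) := by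
      exact_mod_cast Finset.one_le_card.2 (hAne 0 le_rfl)
    have hl : (1:ℝ) ≤ (D:ℝ) * ((A 0).card : ℝ) := by nlinarith [hDr, hc0]
    by_contra hneg
    push_neg at hneg
    have hneg' : ρstar * ((A (0+η)).card : ℝ) ≤ 0 :=
      mul_nonpos_iff.2 (Or.inr ⟨hneg, Nat.cast_nonneg _⟩)
    linarith
  set k := ⌈L/s⌉₊ with hk_def
  have hk_lb : L/s ≤ (k:ℝ) := Nat.le_ceil _
  have hk_ub : (k:ℝ) ≤ L/s + 1 := le_of_lt (Nat.ceil_lt_add_one (by positivity))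
  have hsD : (0:ℝ) < s*(D:ℝ) := by positivity
  have hη_le : 2*η ≤ s*(D:ℝ) := by
    have h1 : 2*s ≤ L := by linarith
    have h2 : (2*s)*(s*(D:ℝ)) ≤ L*(s*(D:ℝ)) := mul_le_mul_of_nonneg_right h1 (by positivity)
    have h6 : (2*η)*L ≤ (s*(D:ℝ))*L := by linarith [h2, hηL]
    exact le_of_mul_le_mul_right h6 hLpos
  have hLsη : (L/s)*η = s*(D:ℝ) := by
    rw [div_mul_eq_mul_div, mul_comm L η, hηL, pow_two, mul_assoc]
    field_simp
  have hkη : (k:ℝ)*η ≤ (3/2)*(s*(D:ℝ)) := by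
    have h1 : (k:ℝ)*η ≤ (L/s + 1)*η := mul_le_mul_of_nonneg_right hk_ub hη
    have h2 : (L/s + 1)*η = s*(D:ℝ) + η := by rw [add_mul, hLsη, one_mul]
    linarith
  have hcon' : ρstar < (D:ℝ) - 3*(s*(D:ℝ)) := by
    have h1 : (1 - 3*s) * (D:ℝ) = (D:ℝ) - 3*(s*(D:ℝ)) := by ring
    linarith
  have hsD_half : 3*(s*(D:ℝ)) < (D:ℝ) := by
    have h1 := mul_lt_mul_of_pos_right (show 3*s < 1 by linarith)
      (show (0:ℝ) < (D:ℝ) by linarith)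
    linarith [h1]
  have hDkpos : 0 < (D:ℝ) - (k:ℝ)*η := by linarith
  set q := ((D:ℝ) - (k:ℝ)*η)/ρstar with hq_def
  have hq1 : 1 < q := by
    rw [hq_def, lt_div_iff₀ hρpos, one_mul]
    linarith
  have hqpos : 0 < q := lt_trans one_pos hq1
  -- growth by induction
  have hgrow : ∀ i : ℕ, i ≤ k → q ^ i ≤ ((A ((i:ℝ)*η)).card : ℝ) := by
    intro i
    induction i with
    | zero =>
      intro _
      simp only [Nat.cast_zero, zero_mul, pow_zero]
      exact_mod_cast Finset.one_le_card.2 (hAne 0 le_rfl)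
    | succ i ih =>
      intro hik
      have hik' : i ≤ k := le_trans (Nat.le_succ i) hik
      have h1 := ih hik'
      have h2 := hkey ((i:ℝ)*η) (mul_nonneg (Nat.cast_nonneg i) hη)
      have harg : ((i+1 : ℕ) : ℝ) * η = (i:ℝ)*η + η := by push_cast; ring
      rw [harg]
      have hik2 : (i:ℝ) ≤ (k:ℝ) := by exact_mod_cast hik'
      have hnum : (D:ℝ) - (k:ℝ)*η ≤ (D:ℝ) - (i:ℝ)*η := by
        have := mul_le_mul_of_nonneg_right hik2 hη
        linarith
      have hq_le : q ≤ ((D:ℝ) - (i:ℝ)*η)/ρstar := by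
        rw [hq_def]
        exact (div_le_div_iff_of_pos_right hρpos).2 hnum
      have hstep : ((A ((i:ℝ)*η)).card : ℝ) * (((D:ℝ) - (i:ℝ)*η)/ρstar) ≤
          ((A ((i:ℝ)*η + η)).card : ℝ) := by
        rw [← mul_div_assoc, div_le_iff₀ hρpos]
        linarith [h2]
      calc q ^ (i+1) = q ^ i * q := pow_succ q i
        _ ≤ ((A ((i:ℝ)*η)).card : ℝ) * (((D:ℝ) - (i:ℝ)*η)/ρstar) :=
            mul_le_mul h1 hq_le hqpos.le (Nat.cast_nonneg _)
        _ ≤ ((A ((i:ℝ)*η + η)).card : ℝ) := hstep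
  have hfin : q ^ k ≤ (n:ℝ) := le_trans (hgrow k le_rfl) (hAcard_n _)
  -- take logs
  have hlogn : (k:ℝ) * Real.log q ≤ L := by
    have h := Real.log_le_log (pow_pos hqpos k) hfin
    rwa [Real.log_pow] at h
  have hlogq : 1 - 1/q ≤ Real.log q := by
    have h := Real.log_le_sub_one_of_pos (show (0:ℝ) < 1/q by positivity)
    rw [one_div, Real.log_inv, inv_eq_one_div] at h
    linarith
  have h1q : 1/q = ρstar/((D:ℝ) - (k:ℝ)*η) := by
    rw [hq_def, one_div_div]
  have hratio : ρstar/((D:ℝ) - (k:ℝ)*η) ≤ 1 - (3/2)*s := by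
    rw [div_le_iff₀ hDkpos]
    have e1 : (0:ℝ) ≤ 1 - (3/2)*s := by linarith
    have e2 : (D:ℝ) - (3/2)*(s*(D:ℝ)) ≤ (D:ℝ) - (k:ℝ)*η := by linarith
    have e3 : (1 - (3/2)*s) * ((D:ℝ) - (3/2)*(s*(D:ℝ))) ≤
        (1 - (3/2)*s) * ((D:ℝ) - (k:ℝ)*η) := mul_le_mul_of_nonneg_left e2 e1
    have e4 : (1 - (3/2)*s) * ((D:ℝ) - (3/2)*(s*(D:ℝ))) =
        (D:ℝ) - 3*(s*(D:ℝ)) + (9/4)*(s^2*(D:ℝ)) := by ring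
    have e5 : (0:ℝ) ≤ s^2*(D:ℝ) := by positivity
    linarith
  have hlogq_ge : (3/2)*s ≤ Real.log q := by
    have : 1/q ≤ 1 - (3/2)*s := by rw [h1q]; exact hratio
    linarith
  have hk_pos : (0:ℝ) < (k:ℝ) := lt_of_lt_of_le (by positivity) hk_lb
  have hfinal : (3/2)*L ≤ (k:ℝ) * Real.log q := by
    have h1 : (k:ℝ) * ((3/2)*s) ≤ (k:ℝ) * Real.log q :=
      mul_le_mul_of_nonneg_left hlogq_ge hk_pos.le
    have h2 : (L/s) * ((3/2)*s) ≤ (k:ℝ) * ((3/2)*s) :=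
      mul_le_mul_of_nonneg_right hk_lb (by positivity)
    have h3 : (L/s) * ((3/2)*s) = (3/2)*L := by field_simp
    linarith
  linarith
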